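/- Let D be an n×n EDM with n ≥ 5 generated by points in the plane with pairwise distances ≥ 1 (a penny graph realization), and let M = E − D. Then M has exactly one negative eigenvalue, counted with multiplicity. -/

import Mathlib

private lemma le_of_sq_le' {c t : ℝ} (hc : 0 ≤ c) (ht : 0 ≤ t) (h : c^2 ≤ t^2) : c ≤ t :=
  (pow_le_pow_iff_left₀ hc ht two_ne_zero).mp h

/-- step A : if the first unit vector has angle ≥ arccos(3/4) (i.e. x1 ≤ 3/4),
the second is counterclockwise of it with angle between them ≥ arccos(3/4),
then x2 ≤ 1/8. -/
private lemma penny_stepA (x1 y1 x2 y2 : ℝ)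
    (h1 : x1^2 + y1^2 = 1) (h2 : x2^2 + y2^2 = 1)
    (hx1 : 0 ≤ x1) (hx1' : x1 ≤ 3/4)
    (hy1 : 0 < y1)
    (hP0 : 0 ≤ x1*x2 + y1*y2) (hP : x1*x2 + y1*y2 ≤ 3/4)
    (hC : 0 ≤ x1*y2 - y1*x2) :
    x2 ≤ 1/8 := by
  have hid : x1*(x1*x2 + y1*y2) - y1*(x1*y2 - y1*x2) = x2*(x1^2+y1^2) := by ring
  have hL : (x1*x2 + y1*y2)^2 + (x1*y2 - y1*x2)^2 = (x1^2+y1^2)*(x2^2+y2^2) := by ring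
  have hy1sq : 7/16 ≤ y1^2 := by nlinarith
  have hCsq : 7/16 ≤ (x1*y2 - y1*x2)^2 := by nlinarith
  have ht : 7/16 ≤ y1*(x1*y2 - y1*x2) := by
    have h49 : (7/16 : ℝ)^2 ≤ (y1*(x1*y2 - y1*x2))^2 := by nlinarith
    exact le_of_sq_le' (by norm_num) (mul_nonneg hy1.le hC) h49
  nlinarith [mul_le_mul hx1' hP hP0 (by norm_num : (0:ℝ) ≤ 3/4)]

/-- step B : if x1 ≤ 1/8 then the next vector counterclockwise by angle ≥ arccos(3/4)
has negative x coordinate — contradiction with x2 ≥ 0. -/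
private lemma penny_stepB (x1 y1 x2 y2 : ℝ)
    (h1 : x1^2 + y1^2 = 1) (h2 : x2^2 + y2^2 = 1)
    (hx1 : 0 ≤ x1) (hx1' : x1 ≤ 1/8)
    (hy1 : 0 < y1) (hx2 : 0 ≤ x2)
    (hP0 : 0 ≤ x1*x2 + y1*y2) (hP : x1*x2 + y1*y2 ≤ 3/4)
    (hC : 0 ≤ x1*y2 - y1*x2) :
    False := by
  have hid : x1*(x1*x2 + y1*y2) - y1*(x1*y2 - y1*x2) = x2*(x1^2+y1^2) := by ring
  have hL : (x1*x2 + y1*y2)^2 + (x1*y2 - y1*x2)^2 = (x1^2+y1^2)*(x2^2+y2^2) := by ring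
  have hy1sq : 63/64 ≤ y1^2 := by nlinarith
  have hCsq : 7/16 ≤ (x1*y2 - y1*x2)^2 := by nlinarith
  have ht : 21/32 ≤ y1*(x1*y2 - y1*x2) := by
    have h49 : (21/32 : ℝ)^2 ≤ (y1*(x1*y2 - y1*x2))^2 := by nlinarith
    exact le_of_sq_le' (by norm_num) (mul_nonneg hy1.le hC) h49
  nlinarith [mul_le_mul hx1' hP hP0 (by norm_num : (0:ℝ) ≤ 1/8)]

/-- a chain of three unit vectors in the upper half plane, each counterclockwise
from the previous by an angle in [arccos(3/4), π/2], starting at angle ≥ arccos(3/4):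
impossible. -/
private lemma penny_chain3 (xa ya xb yb xc yc : ℝ)
    (ha : xa^2 + ya^2 = 1) (hb : xb^2 + yb^2 = 1) (hc : xc^2 + yc^2 = 1)
    (hxa : 0 ≤ xa) (hxa' : xa ≤ 3/4) (hxb : 0 ≤ xb) (hxc : 0 ≤ xc)
    (hya : 0 < ya) (hyb : 0 < yb)
    (hPab0 : 0 ≤ xa*xb + ya*yb) (hPab : xa*xb + ya*yb ≤ 3/4)
    (hPbc0 : 0 ≤ xb*xc + yb*yc) (hPbc : xb*xc + yb*yc ≤ 3/4)
    (hCab : 0 ≤ xa*yb - ya*xb) (hCbc : 0 ≤ xb*yc - yb*xc) : False := by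
  have h18 : xb ≤ 1/8 := penny_stepA xa ya xb yb ha hb hxa hxa' hya hPab0 hPab hCab
  exact penny_stepB xb yb xc yc hb hc hxb h18 hyb hxc hPbc0 hPbc hCbc

/-- three unit vectors in the open upper half plane with x-coordinates in [0,3/4]
and pairwise angles in [arccos(3/4), π/2] : impossible. -/
private lemma penny_upper3 (x1 y1 x2 y2 x3 y3 : ℝ)
    (h1 : x1^2 + y1^2 = 1) (h2 : x2^2 + y2^2 = 1) (h3 : x3^2 + y3^2 = 1)
    (hx1 : 0 ≤ x1) (hx1' : x1 ≤ 3/4) (hx2 : 0 ≤ x2) (hx2' : x2 ≤ 3/4)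
    (hx3 : 0 ≤ x3) (hx3' : x3 ≤ 3/4)
    (hy1 : 0 < y1) (hy2 : 0 < y2) (hy3 : 0 < y3)
    (hP12 : 0 ≤ x1*x2 + y1*y2) (hP12' : x1*x2 + y1*y2 ≤ 3/4)
    (hP13 : 0 ≤ x1*x3 + y1*y3) (hP13' : x1*x3 + y1*y3 ≤ 3/4)
    (hP23 : 0 ≤ x2*x3 + y2*y3) (hP23' : x2*x3 + y2*y3 ≤ 3/4) : False := by
  rcases le_total 0 (x1*y2 - y1*x2) with h12 | h12
  · rcases le_total 0 (x2*y3 - y2*x3) with h23 | h23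
    · exact penny_chain3 x1 y1 x2 y2 x3 y3 h1 h2 h3 hx1 hx1' hx2 hx3 hy1 hy2
        hP12 hP12' hP23 hP23' h12 h23
    · rcases le_total 0 (x1*y3 - y1*x3) with h13 | h13
      · exact penny_chain3 x1 y1 x3 y3 x2 y2 h1 h3 h2 hx1 hx1' hx3 hx2 hy1 hy3
          hP13 hP13' (by linarith) (by linarith) h13 (by linarith)
      · exact penny_chain3 x3 y3 x1 y1 x2 y2 h3 h1 h2 hx3 hx3' hx1 hx2 hy3 hy1
          (by linarith) (by linarith) hP12 hP12' (by linarith) h12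
  · rcases le_total 0 (x2*y3 - y2*x3) with h23 | h23
    · rcases le_total 0 (x1*y3 - y1*x3) with h13 | h13
      · exact penny_chain3 x2 y2 x1 y1 x3 y3 h2 h1 h3 hx2 hx2' hx1 hx3 hy2 hy1
          (by linarith) (by linarith) hP13 hP13' (by linarith) h13
      · exact penny_chain3 x2 y2 x3 y3 x1 y1 h2 h3 h1 hx2 hx2' hx3 hx1 hy2 hy3
          hP23 hP23' (by linarith) (by linarith) h23 (by linarith)
    · exact penny_chain3 x3 y3 x2 y2 x1 y1 h3 h2 h1 hx3 hx3' hx2 hx1 hy3 hy2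
        (by linarith) (by linarith) (by linarith) (by linarith) (by linarith) (by linarith)

/-- two unit vectors in the upper half plane and one in the lower, with the usual bounds:
impossible. -/
private lemma penny_mixed (xa ya xb yb xc yc : ℝ)
    (ha : xa^2 + ya^2 = 1) (hb : xb^2 + yb^2 = 1) (hc : xc^2 + yc^2 = 1)
    (hxa : 0 ≤ xa) (hxa' : xa ≤ 3/4) (hxb : 0 ≤ xb) (hxb' : xb ≤ 3/4)
    (hxc : 0 ≤ xc) (hxc' : xc ≤ 3/4)
    (hya : 0 < ya) (hyb : 0 < yb) (hyc : yc < 0)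
    (hPab0 : 0 ≤ xa*xb + ya*yb) (hPab : xa*xb + ya*yb ≤ 3/4)
    (hPac0 : 0 ≤ xa*xc + ya*yc) (hPbc0 : 0 ≤ xb*xc + yb*yc) : False := by
  have hyasq : 7/16 ≤ ya^2 := by nlinarith [mul_le_mul hxa' hxa' hxa (by norm_num : (0:ℝ) ≤ 3/4)]
  have hybsq : 7/16 ≤ yb^2 := by nlinarith [mul_le_mul hxb' hxb' hxb (by norm_num : (0:ℝ) ≤ 3/4)]
  have hycsq : 7/16 ≤ yc^2 := by nlinarith [mul_le_mul hxc' hxc' hxc (by norm_num : (0:ℝ) ≤ 3/4)]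
  have hac : 7/16 ≤ ya * (-yc) := by
    refine le_of_sq_le' (by norm_num) (mul_nonneg hya.le (by linarith)) ?_
    nlinarith [mul_le_mul hyasq hycsq (by norm_num) (sq_nonneg ya)]
  have hbc : 7/16 ≤ yb * (-yc) := by
    refine le_of_sq_le' (by norm_num) (mul_nonneg hyb.le (by linarith)) ?_
    nlinarith [mul_le_mul hybsq hycsq (by norm_num) (sq_nonneg yb)]
  have hra : ya * (-yc) = -(ya*yc) := by ring
  have hrb : yb * (-yc) = -(yb*yc) := by ring
  have hxa712 : 7/12 ≤ xa := by
    have h2' : xa*xc ≤ xa*(3/4) := mul_le_mul_of_nonneg_left hxc' hxa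
    linarith
  have hxb712 : 7/12 ≤ xb := by
    have h2' : xb*xc ≤ xb*(3/4) := mul_le_mul_of_nonneg_left hxc' hxb
    linarith
  rcases le_total 0 (xa*yb - ya*xb) with h | h
  · have := penny_stepA xa ya xb yb ha hb hxa hxa' hya hPab0 hPab h
    linarith
  · have := penny_stepA xb yb xa ya hb ha hxb hxb' hyb (by linarith) (by linarith) (by linarith)
    linarith

/-- three unit vectors with x ∈ [0,3/4], y ≠ 0, pairwise dot products in [0,3/4]:
impossible. -/
private lemma penny_unit3 (x1 y1 x2 y2 x3 y3 : ℝ)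
    (h1 : x1^2 + y1^2 = 1) (h2 : x2^2 + y2^2 = 1) (h3 : x3^2 + y3^2 = 1)
    (hx1 : 0 ≤ x1) (hx1' : x1 ≤ 3/4) (hx2 : 0 ≤ x2) (hx2' : x2 ≤ 3/4)
    (hx3 : 0 ≤ x3) (hx3' : x3 ≤ 3/4)
    (hy1 : y1 ≠ 0) (hy2 : y2 ≠ 0) (hy3 : y3 ≠ 0)
    (hP12 : 0 ≤ x1*x2 + y1*y2) (hP12' : x1*x2 + y1*y2 ≤ 3/4)
    (hP13 : 0 ≤ x1*x3 + y1*y3) (hP13' : x1*x3 + y1*y3 ≤ 3/4)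
    (hP23 : 0 ≤ x2*x3 + y2*y3) (hP23' : x2*x3 + y2*y3 ≤ 3/4) : False := by
  have n1 : x1^2 + (-y1)^2 = 1 := by linear_combination h1
  have n2 : x2^2 + (-y2)^2 = 1 := by linear_combination h2
  have n3 : x3^2 + (-y3)^2 = 1 := by linear_combination h3
  have e12 : x1*x2 + (-y1)*(-y2) = x1*x2 + y1*y2 := by ring
  have e13 : x1*x3 + (-y1)*(-y3) = x1*x3 + y1*y3 := by ring
  have e23 : x2*x3 + (-y2)*(-y3) = x2*x3 + y2*y3 := by ring
  have c21 : x2*x1 + y2*y1 = x1*x2 + y1*y2 := by ring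
  have c31 : x3*x1 + y3*y1 = x1*x3 + y1*y3 := by ring
  have c32 : x3*x2 + y3*y2 = x2*x3 + y2*y3 := by ring
  have f21 : x2*x1 + (-y2)*(-y1) = x1*x2 + y1*y2 := by ring
  have f31 : x3*x1 + (-y3)*(-y1) = x1*x3 + y1*y3 := by ring
  have f32 : x3*x2 + (-y3)*(-y2) = x2*x3 + y2*y3 := by ring
  rcases hy1.lt_or_gt with s1 | s1 <;> rcases hy2.lt_or_gt with s2 | s2 <;>
    rcases hy3.lt_or_gt with s3 | s3
  · -- all negative : flip
    exact penny_upper3 x1 (-y1) x2 (-y2) x3 (-y3) n1 n2 n3 hx1 hx1' hx2 hx2' hx3 hx3'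
      (by linarith) (by linarith) (by linarith)
      (by linarith [e12]) (by linarith [e12]) (by linarith [e13]) (by linarith [e13])
      (by linarith [e23]) (by linarith [e23])
  · -- (-,-,+) : flip, then pattern (+,+,-) : mixed 1 2 3
    exact penny_mixed x1 (-y1) x2 (-y2) x3 (-y3) n1 n2 n3 hx1 hx1' hx2 hx2' hx3 hx3'
      (by linarith) (by linarith) (by linarith)
      (by linarith [e12]) (by linarith [e12]) (by linarith [e13]) (by linarith [e23])
  · -- (-,+,-) : flip → (+,-,+) : mixed on (1,3 up / 2 down)
    exact penny_mixed x1 (-y1) x3 (-y3) x2 (-y2) n1 n3 n2 hx1 hx1' hx3 hx3' hx2 hx2'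
      (by linarith) (by linarith) (by linarith)
      (by linarith [e13]) (by linarith [e13]) (by linarith [e12]) (by linarith [f32])
  · -- (-,+,+) : 2,3 up, 1 down : mixed 2 3 1
    exact penny_mixed x2 y2 x3 y3 x1 y1 h2 h3 h1 hx2 hx2' hx3 hx3' hx1 hx1'
      s2 s3 s1 hP23 hP23' (by linarith [c21]) (by linarith [c31])
  · -- (+,-,-) : flip → (-,+,+) : mixed 2 3 1 flipped
    exact penny_mixed x2 (-y2) x3 (-y3) x1 (-y1) n2 n3 n1 hx2 hx2' hx3 hx3' hx1 hx1'
      (by linarith) (by linarith) (by linarith)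
      (by linarith [e23]) (by linarith [e23]) (by linarith [f21]) (by linarith [f31])
  · -- (+,-,+) : mixed 1 3 2
    exact penny_mixed x1 y1 x3 y3 x2 y2 h1 h3 h2 hx1 hx1' hx3 hx3' hx2 hx2'
      s1 s3 s2 hP13 hP13' hP12 (by linarith [c32])
  · -- (+,+,-) : mixed 1 2 3
    exact penny_mixed x1 y1 x2 y2 x3 y3 h1 h2 h3 hx1 hx1' hx2 hx2' hx3 hx3'
      s1 s2 s3 hP12 hP12' hP13 hP23
  · -- all positive
    exact penny_upper3 x1 y1 x2 y2 x3 y3 h1 h2 h3 hx1 hx1' hx2 hx2' hx3 hx3'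
      s1 s2 s3 hP12 hP12' hP13 hP13' hP23 hP23'

/-- homogeneous version of `penny_unit3`. -/
private lemma penny_core3 (x1 y1 x2 y2 x3 y3 N1 N2 N3 : ℝ)
    (hN1 : 1 ≤ N1) (hN2 : 1 ≤ N2) (hN3 : 1 ≤ N3)
    (h1 : x1^2 + y1^2 = N1) (h2 : x2^2 + y2^2 = N2) (h3 : x3^2 + y3^2 = N3)
    (hx1 : 0 ≤ x1) (hx1' : 16*x1^2 ≤ 9*N1)
    (hx2 : 0 ≤ x2) (hx2' : 16*x2^2 ≤ 9*N2)
    (hx3 : 0 ≤ x3) (hx3' : 16*x3^2 ≤ 9*N3)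
    (hP12 : 0 ≤ x1*x2 + y1*y2) (hP12' : 16*(x1*x2 + y1*y2)^2 ≤ 9*N1*N2)
    (hP13 : 0 ≤ x1*x3 + y1*y3) (hP13' : 16*(x1*x3 + y1*y3)^2 ≤ 9*N1*N3)
    (hP23 : 0 ≤ x2*x3 + y2*y3) (hP23' : 16*(x2*x3 + y2*y3)^2 ≤ 9*N2*N3) : False := by
  have hN1' : (0:ℝ) < N1 := by linarith
  have hN2' : (0:ℝ) < N2 := by linarith
  have hN3' : (0:ℝ) < N3 := by linarith
  set R1 := Real.sqrt N1 with hR1def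
  set R2 := Real.sqrt N2 with hR2def
  set R3 := Real.sqrt N3 with hR3def
  have hR1 : 0 < R1 := Real.sqrt_pos.mpr hN1'
  have hR2 : 0 < R2 := Real.sqrt_pos.mpr hN2'
  have hR3 : 0 < R3 := Real.sqrt_pos.mpr hN3'
  have hR1sq : R1^2 = N1 := Real.sq_sqrt hN1'.le
  have hR2sq : R2^2 = N2 := Real.sq_sqrt hN2'.le
  have hR3sq : R3^2 = N3 := Real.sq_sqrt hN3'.le
  -- normalized vectors
  have key : ∀ x y N R : ℝ, 0 < R → R^2 = N → x^2 + y^2 = N →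
      (x/R)^2 + (y/R)^2 = 1 := by
    intro x y N R hR hRsq h
    field_simp
    linarith [hRsq, h]
  have u1 := key x1 y1 N1 R1 hR1 hR1sq h1
  have u2 := key x2 y2 N2 R2 hR2 hR2sq h2
  have u3 := key x3 y3 N3 R3 hR3 hR3sq h3
  -- x bounds
  have xb : ∀ x y N R : ℝ, 0 < R → R^2 = N → 0 ≤ x → 16*x^2 ≤ 9*N → x/R ≤ 3/4 := by
    intro x y N R hR hRsq hx h
    rw [div_le_iff₀ hR]
    have e1 : (3*R)^2 = 9*N := by rw [mul_pow]; rw [hRsq]; norm_num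
    have e2 : (4*x)^2 = 16*x^2 := by ring
    have h4 : (4*x)^2 ≤ (3*R)^2 := by linarith
    have := le_of_sq_le' (by linarith) (by linarith) h4
    linarith
  have b1 := xb x1 y1 N1 R1 hR1 hR1sq hx1 hx1'
  have b2 := xb x2 y2 N2 R2 hR2 hR2sq hx2 hx2'
  have b3 := xb x3 y3 N3 R3 hR3 hR3sq hx3 hx3'
  -- y nonzero
  have yb : ∀ x y N R : ℝ, 0 < R → R^2 = N → 1 ≤ N → x^2 + y^2 = N → 16*x^2 ≤ 9*N →
      y/R ≠ 0 := by
    intro x y N R hR hRsq hN h hx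
    have : 7/16 ≤ y^2 := by linarith [h, hx, hN]
    have hy : y ≠ 0 := by intro h0; rw [h0] at this; norm_num at this
    exact div_ne_zero hy hR.ne'
  have v1 := yb x1 y1 N1 R1 hR1 hR1sq hN1 h1 hx1'
  have v2 := yb x2 y2 N2 R2 hR2 hR2sq hN2 h2 hx2'
  have v3 := yb x3 y3 N3 R3 hR3 hR3sq hN3 h3 hx3'
  -- pairwise dot products
  have pd : ∀ xi yi xj yj Ri Rj : ℝ, 0 < Ri → 0 < Rj →
      (xi/Ri)*(xj/Rj) + (yi/Ri)*(yj/Rj) = (xi*xj + yi*yj)/(Ri*Rj) := by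
    intro xi yi xj yj Ri Rj hi hj
    field_simp
  have pb : ∀ xi yi xj yj Ni Nj Ri Rj : ℝ, 0 < Ri → 0 < Rj → Ri^2 = Ni → Rj^2 = Nj →
      0 ≤ xi*xj + yi*yj → 16*(xi*xj + yi*yj)^2 ≤ 9*Ni*Nj →
      (xi*xj + yi*yj)/(Ri*Rj) ≤ 3/4 := by
    intro xi yi xj yj Ni Nj Ri Rj hi hj hisq hjsq hp h
    rw [div_le_iff₀ (by positivity)]
    have e1 : (3*(Ri*Rj))^2 = 9*Ni*Nj := by
      rw [mul_pow, mul_pow, hisq, hjsq]; ring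
    have e2 : (4*(xi*xj + yi*yj))^2 = 16*(xi*xj + yi*yj)^2 := by ring
    have h4 : (4*(xi*xj + yi*yj))^2 ≤ (3*(Ri*Rj))^2 := by linarith
    have := le_of_sq_le' (by linarith) (by positivity) h4
    linarith
  refine penny_unit3 (x1/R1) (y1/R1) (x2/R2) (y2/R2) (x3/R3) (y3/R3)
    u1 u2 u3 (by positivity) b1 (by positivity) b2 (by positivity) b3 v1 v2 v3 ?_ ?_ ?_ ?_ ?_ ?_
  · rw [pd x1 y1 x2 y2 R1 R2 hR1 hR2]; positivity
  · rw [pd x1 y1 x2 y2 R1 R2 hR1 hR2]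
    exact pb x1 y1 x2 y2 N1 N2 R1 R2 hR1 hR2 hR1sq hR2sq hP12 hP12'
  · rw [pd x1 y1 x3 y3 R1 R3 hR1 hR3]; positivity
  · rw [pd x1 y1 x3 y3 R1 R3 hR1 hR3]
    exact pb x1 y1 x3 y3 N1 N3 R1 R3 hR1 hR3 hR1sq hR3sq hP13 hP13'
  · rw [pd x2 y2 x3 y3 R2 R3 hR2 hR3]; positivity
  · rw [pd x2 y2 x3 y3 R2 R3 hR2 hR3]
    exact pb x2 y2 x3 y3 N2 N3 R2 R3 hR2 hR3 hR2sq hR3sq hP23 hP23'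

/-- for two planar vectors with norms² in [1,2] and difference norm² in [1,2],
the dot product is in [0, (3/4)·|u||v|]. -/
private lemma penny_pair_bound (m n d dt : ℝ)
    (hm1 : 1 ≤ m) (hm2 : m ≤ 2) (hn1 : 1 ≤ n) (hn2 : n ≤ 2)
    (hd1 : 1 ≤ d) (hd2 : d ≤ 2) (hdot : 2*dt = m + n - d) :
    0 ≤ dt ∧ 16*dt^2 ≤ 9*m*n := by
  constructor
  · linarith
  · have h0 : 0 ≤ m + n - d := by linarith
    have h1 : m + n - d ≤ m + n - 1 := by linarith
    have hsq : (m+n-d)^2 ≤ (m+n-1)^2 := pow_le_pow_left₀ h0 h1 2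
    have hcert : 4*(m+n-1)^2 ≤ 9*m*n := by
      nlinarith [mul_nonneg (by linarith : (0:ℝ) ≤ 2-m) (by linarith : (0:ℝ) ≤ m-1),
        mul_nonneg (by linarith : (0:ℝ) ≤ 2-n) (by linarith : (0:ℝ) ≤ n-1),
        mul_nonneg (by linarith : (0:ℝ) ≤ 2-m) (by linarith : (0:ℝ) ≤ 2-n),
        mul_nonneg (by linarith : (0:ℝ) ≤ 2-m) (by linarith : (0:ℝ) ≤ n-1),
        mul_nonneg (by linarith : (0:ℝ) ≤ m-1) (by linarith : (0:ℝ) ≤ 2-n)]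
    have e : 16*dt^2 = 4*(2*dt)^2 := by ring
    rw [e, hdot]
    linarith

set_option maxHeartbeats 2000000 in
/-- four planar vectors with norms² in [1,2] and pairwise difference norms² in [1,2]:
impossible. -/
private lemma penny_four_vec (a1 b1 a2 b2 a3 b3 a4 b4 : ℝ)
    (hn1 : 1 ≤ a1^2+b1^2) (hn1' : a1^2+b1^2 ≤ 2)
    (hn2 : 1 ≤ a2^2+b2^2) (hn2' : a2^2+b2^2 ≤ 2)
    (hn3 : 1 ≤ a3^2+b3^2) (hn3' : a3^2+b3^2 ≤ 2)
    (hn4 : 1 ≤ a4^2+b4^2) (hn4' : a4^2+b4^2 ≤ 2)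
    (h12 : 1 ≤ (a1-a2)^2+(b1-b2)^2) (h12' : (a1-a2)^2+(b1-b2)^2 ≤ 2)
    (h13 : 1 ≤ (a1-a3)^2+(b1-b3)^2) (h13' : (a1-a3)^2+(b1-b3)^2 ≤ 2)
    (h14 : 1 ≤ (a1-a4)^2+(b1-b4)^2) (h14' : (a1-a4)^2+(b1-b4)^2 ≤ 2)
    (h23 : 1 ≤ (a2-a3)^2+(b2-b3)^2) (h23' : (a2-a3)^2+(b2-b3)^2 ≤ 2)
    (h24 : 1 ≤ (a2-a4)^2+(b2-b4)^2) (h24' : (a2-a4)^2+(b2-b4)^2 ≤ 2)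
    (h34 : 1 ≤ (a3-a4)^2+(b3-b4)^2) (h34' : (a3-a4)^2+(b3-b4)^2 ≤ 2) : False := by
  obtain ⟨d12, d12'⟩ := penny_pair_bound (a1^2+b1^2) (a2^2+b2^2) _ (a1*a2+b1*b2)
    hn1 hn1' hn2 hn2' h12 h12' (by ring)
  obtain ⟨d13, d13'⟩ := penny_pair_bound (a1^2+b1^2) (a3^2+b3^2) _ (a1*a3+b1*b3)
    hn1 hn1' hn3 hn3' h13 h13' (by ring)
  obtain ⟨d14, d14'⟩ := penny_pair_bound (a1^2+b1^2) (a4^2+b4^2) _ (a1*a4+b1*b4)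
    hn1 hn1' hn4 hn4' h14 h14' (by ring)
  obtain ⟨d23, d23'⟩ := penny_pair_bound (a2^2+b2^2) (a3^2+b3^2) _ (a2*a3+b2*b3)
    hn2 hn2' hn3 hn3' h23 h23' (by ring)
  obtain ⟨d24, d24'⟩ := penny_pair_bound (a2^2+b2^2) (a4^2+b4^2) _ (a2*a4+b2*b4)
    hn2 hn2' hn4 hn4' h24 h24' (by ring)
  obtain ⟨d34, d34'⟩ := penny_pair_bound (a3^2+b3^2) (a4^2+b4^2) _ (a3*a4+b3*b4)
    hn3 hn3' hn4 hn4' h34 h34' (by ring)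
  have hn1p : (0:ℝ) ≤ a1^2+b1^2 := by positivity
  -- rotated coordinates : x_k = dot(v1,vk), y_k = cross(v1,vk), N_k = n1*n_k
  refine penny_core3 (a1*a2+b1*b2) (a1*b2-b1*a2) (a1*a3+b1*b3) (a1*b3-b1*a3)
    (a1*a4+b1*b4) (a1*b4-b1*a4) ((a1^2+b1^2)*(a2^2+b2^2)) ((a1^2+b1^2)*(a3^2+b3^2))
    ((a1^2+b1^2)*(a4^2+b4^2)) ?_ ?_ ?_ (by ring) (by ring) (by ring)
    d12 (by linarith [d12']) d13 (by linarith [d13']) d14 (by linarith [d14'])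
    ?_ ?_ ?_ ?_ ?_ ?_
  · calc (1:ℝ) = 1*1 := by norm_num
      _ ≤ (a1^2+b1^2)*(a2^2+b2^2) := mul_le_mul hn1 hn2 (by norm_num) (by positivity)
  · calc (1:ℝ) = 1*1 := by norm_num
      _ ≤ (a1^2+b1^2)*(a3^2+b3^2) := mul_le_mul hn1 hn3 (by norm_num) (by positivity)
  · calc (1:ℝ) = 1*1 := by norm_num
      _ ≤ (a1^2+b1^2)*(a4^2+b4^2) := mul_le_mul hn1 hn4 (by norm_num) (by positivity)
  · -- 0 ≤ x2*x3 + y2*y3 = n1 * dot23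
    have e : (a1*a2+b1*b2)*(a1*a3+b1*b3) + (a1*b2-b1*a2)*(a1*b3-b1*a3)
        = (a1^2+b1^2)*(a2*a3+b2*b3) := by ring
    rw [e]
    exact mul_nonneg hn1p d23
  · have e : (a1*a2+b1*b2)*(a1*a3+b1*b3) + (a1*b2-b1*a2)*(a1*b3-b1*a3)
        = (a1^2+b1^2)*(a2*a3+b2*b3) := by ring
    rw [e]
    have := mul_le_mul_of_nonneg_left d23' (sq_nonneg (a1^2+b1^2))
    linarith [this]
  · have e : (a1*a2+b1*b2)*(a1*a4+b1*b4) + (a1*b2-b1*a2)*(a1*b4-b1*a4)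
        = (a1^2+b1^2)*(a2*a4+b2*b4) := by ring
    rw [e]
    exact mul_nonneg hn1p d24
  · have e : (a1*a2+b1*b2)*(a1*a4+b1*b4) + (a1*b2-b1*a2)*(a1*b4-b1*a4)
        = (a1^2+b1^2)*(a2*a4+b2*b4) := by ring
    rw [e]
    have := mul_le_mul_of_nonneg_left d24' (sq_nonneg (a1^2+b1^2))
    linarith [this]
  · have e : (a1*a3+b1*b3)*(a1*a4+b1*b4) + (a1*b3-b1*a3)*(a1*b4-b1*a4)
        = (a1^2+b1^2)*(a3*a4+b3*b4) := by ring
    rw [e]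
    exact mul_nonneg hn1p d34
  · have e : (a1*a3+b1*b3)*(a1*a4+b1*b4) + (a1*b3-b1*a3)*(a1*b4-b1*a4)
        = (a1^2+b1^2)*(a3*a4+b3*b4) := by ring
    rw [e]
    have := mul_le_mul_of_nonneg_left d34' (sq_nonneg (a1^2+b1^2))
    linarith [this]

private lemma penny_dist_sq (u v : EuclideanSpace ℝ (Fin 2)) :
    dist u v ^ 2 = (u 0 - v 0)^2 + (u 1 - v 1)^2 := by
  rw [EuclideanSpace.dist_eq, Real.sq_sqrt (by positivity)]
  simp [Fin.sum_univ_two, Real.dist_eq, sq_abs]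

/-- five points in the plane with pairwise distances in [1, √2] : impossible. -/
private lemma penny_no_five (q : Fin 5 → EuclideanSpace ℝ (Fin 2))
    (hlow : ∀ i j, i ≠ j → 1 ≤ dist (q i) (q j))
    (hhigh : ∀ i j, i ≠ j → dist (q i) (q j) ^ 2 ≤ 2) : False := by
  have pair : ∀ i j, i ≠ j → 1 ≤ (q i 0 - q j 0)^2 + (q i 1 - q j 1)^2 ∧
      (q i 0 - q j 0)^2 + (q i 1 - q j 1)^2 ≤ 2 := by
    intro i j hij
    have h1 := hlow i j hij
    have h2 := hhigh i j hij
    rw [penny_dist_sq] at h2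
    constructor
    · have : 1 ≤ dist (q i) (q j) ^ 2 := by nlinarith [dist_nonneg (x := q i) (y := q j)]
      rw [penny_dist_sq] at this; exact this
    · exact h2
  -- differences from q 0
  have key : ∀ i j : Fin 5, i ≠ j →
      1 ≤ ((q i 0 - q 0 0) - (q j 0 - q 0 0))^2 + ((q i 1 - q 0 1) - (q j 1 - q 0 1))^2 ∧
      ((q i 0 - q 0 0) - (q j 0 - q 0 0))^2 + ((q i 1 - q 0 1) - (q j 1 - q 0 1))^2 ≤ 2 := by
    intro i j hij
    have h := pair i j hij
    constructor
    · have e : ((q i 0 - q 0 0) - (q j 0 - q 0 0))^2 + ((q i 1 - q 0 1) - (q j 1 - q 0 1))^2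
        = (q i 0 - q j 0)^2 + (q i 1 - q j 1)^2 := by ring
      rw [e]; exact h.1
    · have e : ((q i 0 - q 0 0) - (q j 0 - q 0 0))^2 + ((q i 1 - q 0 1) - (q j 1 - q 0 1))^2
        = (q i 0 - q j 0)^2 + (q i 1 - q j 1)^2 := by ring
      rw [e]; exact h.2
  have norm1 : ∀ i : Fin 5, i ≠ 0 → 1 ≤ (q i 0 - q 0 0)^2 + (q i 1 - q 0 1)^2 ∧
      (q i 0 - q 0 0)^2 + (q i 1 - q 0 1)^2 ≤ 2 := fun i hi => pair i 0 hi
  obtain ⟨m1, m1'⟩ := norm1 1 (by decide)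
  obtain ⟨m2, m2'⟩ := norm1 2 (by decide)
  obtain ⟨m3, m3'⟩ := norm1 3 (by decide)
  obtain ⟨m4, m4'⟩ := norm1 4 (by decide)
  obtain ⟨e12, e12'⟩ := key 1 2 (by decide)
  obtain ⟨e13, e13'⟩ := key 1 3 (by decide)
  obtain ⟨e14, e14'⟩ := key 1 4 (by decide)
  obtain ⟨e23, e23'⟩ := key 2 3 (by decide)
  obtain ⟨e24, e24'⟩ := key 2 4 (by decide)
  obtain ⟨e34, e34'⟩ := key 3 4 (by decide)
  exact penny_four_vec (q 1 0 - q 0 0) (q 1 1 - q 0 1) (q 2 0 - q 0 0) (q 2 1 - q 0 1)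
    (q 3 0 - q 0 0) (q 3 1 - q 0 1) (q 4 0 - q 0 0) (q 4 1 - q 0 1)
    m1 m1' m2 m2' m3 m3' m4 m4' e12 e12' e13 e13' e14 e14' e23 e23' e24 e24' e34 e34'

private lemma penny_quad_identity {n : ℕ} (x A B : Fin n → ℝ) :
    ∑ i, ∑ j, x i * ((1 - ((A i - A j)^2 + (B i - B j)^2)) * x j)
    = (∑ i, x i)^2 - 2*(∑ i, x i)*(∑ i, x i * (A i^2 + B i^2))
      + 2*(∑ i, x i * A i)^2 + 2*(∑ i, x i * B i)^2 := by
  have s0 : ∀ f g : Fin n → ℝ, ∑ i, ∑ j, f i * g j = (∑ i, f i) * (∑ j, g j) :=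
    fun f g => (Finset.sum_mul_sum Finset.univ Finset.univ f g).symm
  calc ∑ i, ∑ j, x i * ((1 - ((A i - A j)^2 + (B i - B j)^2)) * x j)
      = ∑ i, ∑ j, (x i * x j + (-(x i * (A i^2 + B i^2))) * x j
          + x i * (-(x j * (A j^2 + B j^2)))
          + (2*(x i * A i)) * (x j * A j) + (2*(x i * B i)) * (x j * B j)) :=
        Finset.sum_congr rfl fun i _ => Finset.sum_congr rfl fun j _ => by ring
    _ = (∑ i, ∑ j, x i * x j) + (∑ i, ∑ j, (-(x i * (A i^2 + B i^2))) * x j)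
          + (∑ i, ∑ j, x i * (-(x j * (A j^2 + B j^2))))
          + (∑ i, ∑ j, (2*(x i * A i)) * (x j * A j))
          + (∑ i, ∑ j, (2*(x i * B i)) * (x j * B j)) := by
        simp only [Finset.sum_add_distrib]
    _ = (∑ i, x i) * (∑ j, x j)
          + (∑ i, -(x i * (A i^2 + B i^2))) * (∑ j, x j)
          + (∑ i, x i) * (∑ j, -(x j * (A j^2 + B j^2)))
          + (∑ i, 2*(x i * A i)) * (∑ j, x j * A j)
          + (∑ i, 2*(x i * B i)) * (∑ j, x j * B j) := by
        rw [s0, s0, s0, s0, s0]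
    _ = (∑ i, x i)^2 - 2*(∑ i, x i)*(∑ i, x i * (A i^2 + B i^2))
          + 2*(∑ i, x i * A i)^2 + 2*(∑ i, x i * B i)^2 := by
        rw [Finset.sum_neg_distrib, ← Finset.mul_sum, ← Finset.mul_sum]
        ring

theorem penny_EDM_one_negative_eigenvalue
    (n : ℕ) (hn : 5 ≤ n)
    (p : Fin n → EuclideanSpace ℝ (Fin 2))
    (hsep : ∀ i j, i ≠ j → 1 ≤ dist (p i) (p j))
    (D E M : Matrix (Fin n) (Fin n) ℝ)
    (hD : ∀ i j, D i j = dist (p i) (p j) ^ 2)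
    (hE : ∀ i j, E i j = 1) (hM : M = E - D)
    (hHerm : M.IsHermitian) :
    (Finset.univ.filter (fun i => hHerm.eigenvalues i < 0)).card = 1 := by
  classical
  have hMij : ∀ i j, M i j = 1 - ((p i 0 - p j 0)^2 + (p i 1 - p j 1)^2) := by
    intro i j
    rw [hM, Matrix.sub_apply, hE, hD, penny_dist_sq]
  have hform : ∀ x : Fin n → ℝ, dotProduct x (M.mulVec x)
      = (∑ i, x i)^2 - 2*(∑ i, x i)*(∑ i, x i * ((p i 0)^2 + (p i 1)^2))
        + 2*(∑ i, x i * (p i 0))^2 + 2*(∑ i, x i * (p i 1))^2 := by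
    intro x
    have h1 : dotProduct x (M.mulVec x) = ∑ i, ∑ j, x i * (M i j * x j) := by
      simp [dotProduct, Matrix.mulVec, Finset.mul_sum]
    rw [h1,
      show (∑ i, ∑ j, x i * (M i j * x j))
        = ∑ i, ∑ j, x i * ((1 - ((p i 0 - p j 0)^2 + (p i 1 - p j 1)^2)) * x j) from
        Finset.sum_congr rfl fun i _ => Finset.sum_congr rfl fun j _ => by rw [hMij]]
    exact penny_quad_identity x (fun i => p i 0) (fun i => p i 1)
  -- orthonormality of eigenvectors as dot products
  have horth : ∀ i j : Fin n,
      dotProduct (⇑(hHerm.eigenvectorBasis i)) (⇑(hHerm.eigenvectorBasis j))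
      = if i = j then 1 else 0 := by
    intro i j
    have h := orthonormal_iff_ite.mp (hHerm.eigenvectorBasis).orthonormal i j
    simpa [PiLp.inner_apply, RCLike.inner_apply, dotProduct, mul_comm] using h
  -- Part 1 : at most one negative eigenvalue
  have hcard : (Finset.univ.filter (fun i => hHerm.eigenvalues i < 0)).card ≤ 1 := by
    rw [Finset.card_le_one]
    intro i hi j hj
    by_contra hij
    simp only [Finset.mem_filter, Finset.mem_univ, true_and] at hi hj
    set v : Fin n → ℝ := ⇑(hHerm.eigenvectorBasis i) with hvdef
    set w : Fin n → ℝ := ⇑(hHerm.eigenvectorBasis j) with hwdef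
    have hMv : M.mulVec v = hHerm.eigenvalues i • v := hHerm.mulVec_eigenvectorBasis i
    have hMw : M.mulVec w = hHerm.eigenvalues j • w := hHerm.mulVec_eigenvectorBasis j
    have hvv : dotProduct v v = 1 := by simpa using horth i i
    have hww : dotProduct w w = 1 := by simpa using horth j j
    have hvw : dotProduct v w = 0 := by simpa [hij] using horth i j
    have hwv : dotProduct w v = 0 := by
      rw [dotProduct_comm]; exact hvw
    by_cases hb : (∑ k, v k) = 0
    · have hq := hform v
      have hl : dotProduct v (M.mulVec v) = hHerm.eigenvalues i := by
        rw [hMv, dotProduct_smul, hvv, smul_eq_mul, mul_one]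
      rw [hl, hb] at hq
      nlinarith [sq_nonneg (∑ k, v k * p k 0), sq_nonneg (∑ k, v k * p k 1), hi, hq]
    · set a : ℝ := ∑ k, w k with hadef
      set b : ℝ := ∑ k, v k with hbdef
      set x : Fin n → ℝ := b • w - a • v with hxdef
      have hxsum : ∑ k, x k = 0 := by
        simp only [hxdef, Pi.sub_apply, Pi.smul_apply, smul_eq_mul]
        rw [Finset.sum_sub_distrib, ← Finset.mul_sum, ← Finset.mul_sum, ← hadef, ← hbdef]
        ring
      have hMx : M.mulVec x = b • (hHerm.eigenvalues j • w) - a • (hHerm.eigenvalues i • v) := by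
        rw [hxdef, Matrix.mulVec_sub, Matrix.mulVec_smul, Matrix.mulVec_smul, hMv, hMw]
      have hlhs : dotProduct x (M.mulVec x)
          = b^2 * hHerm.eigenvalues j + a^2 * hHerm.eigenvalues i := by
        rw [hMx, hxdef]
        simp only [sub_dotProduct, dotProduct_sub, smul_dotProduct,
          dotProduct_smul, hvv, hww, hvw, hwv, smul_eq_mul]
        ring
      have hneg : dotProduct x (M.mulVec x) < 0 := by
        rw [hlhs]
        have h1 : b^2 * hHerm.eigenvalues j < 0 :=
          mul_neg_of_pos_of_neg (pow_two_pos_of_ne_zero hb) hj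
        have h2 : a^2 * hHerm.eigenvalues i ≤ 0 :=
          mul_nonpos_of_nonneg_of_nonpos (sq_nonneg a) hi.le
        linarith
      have hpos : 0 ≤ dotProduct x (M.mulVec x) := by
        rw [hform x, hxsum]
        have := sq_nonneg (∑ k, x k * p k 0)
        have := sq_nonneg (∑ k, x k * p k 1)
        nlinarith
      linarith
  -- Part 2 : at least one negative eigenvalue
  have hne : (Finset.univ.filter (fun i => hHerm.eigenvalues i < 0)).Nonempty := by
    by_contra hcon
    rw [Finset.not_nonempty_iff_eq_empty, Finset.filter_eq_empty_iff] at hcon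
    have hnon : ∀ i, 0 ≤ hHerm.eigenvalues i :=
      fun i => le_of_not_gt (hcon (Finset.mem_univ i))
    have hps := hHerm.posSemidef_iff_eigenvalues_nonneg.mpr hnon
    have hpair : ∀ i j : Fin n, i ≠ j → dist (p i) (p j)^2 ≤ 2 := by
      intro i j hij
      set x : Fin n → ℝ := fun k => if k = i then 1 else if k = j then 1 else 0 with hxdef
      have h0 : 0 ≤ dotProduct x (M.mulVec x) := by simpa using hps.dotProduct_mulVec_nonneg x
      have hsum : ∀ f : Fin n → ℝ, ∑ k, x k * f k = f i + f j := by
        intro f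
        have he : ∀ k, x k * f k = (if k = i then f k else 0) + (if k = j then f k else 0) := by
          intro k
          simp only [hxdef]
          by_cases h1 : k = i
          · subst h1
            simp [hij]
          · by_cases h2 : k = j
            · subst h2; simp [h1]
            · simp [h1, h2]
        simp_rw [he, Finset.sum_add_distrib, Finset.sum_ite_eq', Finset.mem_univ, if_true]
      have hsum2 : ∑ k, x k = 2 := by
        have h := hsum (fun _ => 1)
        simp only [mul_one] at h
        rw [h]; norm_num
      rw [hform x, hsum2, hsum (fun k => (p k 0)^2 + (p k 1)^2),
        hsum (fun k => p k 0), hsum (fun k => p k 1)] at h0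
      rw [penny_dist_sq]
      nlinarith [h0]
    refine penny_no_five (fun k => p ⟨k.1, lt_of_lt_of_le k.2 hn⟩) ?_ ?_
    · intro i j hij
      refine hsep _ _ ?_
      intro h
      exact hij (Fin.ext (by simpa using congrArg Fin.val h))
    · intro i j hij
      refine hpair _ _ ?_
      intro h
      exact hij (Fin.ext (by simpa using congrArg Fin.val h))
  have := Finset.card_pos.mpr hne
  omega
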